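/- If all principal minors of an n×n matrix M over a field K of characteristic zero are nonzero, then the quotient S/I_M, where I_M = (y_i Σ_j M_{ij} y_j : i ∈ [n]), has Hilbert series (1+t)^n; that is, its degree-d component has dimension binomial(n, d) and it has total dimension 2^n over K. -/

import Mathlib

set_option linter.unusedSectionVars false

open MvPolynomial Finset

namespace HilbAux

/-- multiplication by `1/(1-t^2)` on coefficient sequences -/
def T (h : ℕ → ℕ) : ℕ → ℕ
  | 0 => h 0
  | 1 => h 1
  | (d+2) => h (d+2) + T h d

/-- shift: multiplication by `t` -/
def sh (h : ℕ → ℕ) : ℕ → ℕ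
  | 0 => 0
  | (d+1) => h d

/-- cumulative sum: multiplication by `1/(1-t)` -/
def cum (h : ℕ → ℕ) : ℕ → ℕ
  | 0 => h 0
  | (d+1) => h (d+1) + cum h d

theorem T_mono {g h : ℕ → ℕ} (hgh : ∀ d, g d ≤ h d) : ∀ d, T g d ≤ T h d
  | 0 => hgh 0
  | 1 => hgh 1
  | (d+2) => add_le_add (hgh _) (T_mono hgh d)

theorem T_add (g h : ℕ → ℕ) : ∀ d, T (fun x => g x + h x) d = T g d + T h d
  | 0 => rfl
  | 1 => rfl
  | (d+2) => by
      show (g (d+2) + h (d+2)) + T (fun x => g x + h x) d = _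
      rw [T_add g h d]; show _ = (g (d+2) + T g d) + (h (d+2) + T h d); omega

theorem T_sh (h : ℕ → ℕ) : ∀ d, T (sh h) (d+1) = T h d
  | 0 => rfl
  | 1 => by show sh h 2 + T (sh h) 0 = h 1; simp [sh, T]
  | (d+2) => by
      show sh h (d+3) + T (sh h) (d+1) = h (d+2) + T h d
      rw [T_sh h d]; rfl

theorem T_cum (h : ℕ → ℕ) : ∀ d, T h (d+1) + T h d = cum h (d+1)
  | 0 => rfl
  | (d+1) => by
      show (h (d+2) + T h d) + T h (d+1) = h (d+2) + cum h (d+1)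
      rw [← T_cum h d]; omega

theorem T_add_sh (h : ℕ → ℕ) : ∀ d, T h d + sh (T h) d = cum h d
  | 0 => rfl
  | (d+1) => T_cum h d

theorem le_T {g h : ℕ → ℕ} (h0 : h 0 ≤ g 0) (h1 : h 1 ≤ g 1)
    (hg : ∀ d, h (d+2) ≤ g (d+2) + h d) : ∀ d, h d ≤ T g d
  | 0 => h0
  | 1 => h1
  | (d+2) => le_trans (hg d) (add_le_add le_rfl (le_T h0 h1 hg d))

theorem eq_of_T_eq {g h : ℕ → ℕ} (he : ∀ d, T g d = T h d) : ∀ d, g d = h d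
  | 0 => he 0
  | 1 => he 1
  | (d+2) => by
      have h2 := he (d+2)
      have hd := he d
      have e1 : T g (d+2) = g (d+2) + T g d := rfl
      have e2 : T h (d+2) = h (d+2) + T h d := rfl
      omega

/-- iterated T -/
def Tn : ℕ → (ℕ → ℕ) → (ℕ → ℕ)
  | 0 => id
  | (k+1) => fun h => T (Tn k h)

theorem eq_of_Tn_eq {g h : ℕ → ℕ} : ∀ k, (∀ d, Tn k g d = Tn k h d) → ∀ d, g d = h d
  | 0, he => he
  | (k+1), he => eq_of_Tn_eq k (eq_of_T_eq he)

def chi (n d : ℕ) : ℕ := n.choose d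
def Dm (n d : ℕ) : ℕ := (n + d - 1).choose d

theorem T_congr {g h : ℕ → ℕ} (e : ∀ d, g d = h d) (d : ℕ) : T g d = T h d := by
  rw [show g = h from funext e]

theorem cum_Dm (n : ℕ) : ∀ d, cum (Dm n) d = Dm (n+1) d
  | 0 => by simp [cum, Dm]
  | (d+1) => by
      show Dm n (d+1) + cum (Dm n) d = _
      rw [cum_Dm n d]
      show (n + (d+1) - 1).choose (d+1) + (n + 1 + d - 1).choose d
          = (n + 1 + (d+1) - 1).choose (d+1)
      have e1 : n + (d+1) - 1 = n + d := by omega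
      have e2 : n + 1 + d - 1 = n + d := by omega
      have e3 : n + 1 + (d+1) - 1 = n + d + 1 := by omega
      rw [e1, e2, e3, Nat.choose_succ_succ (n+d) d]
      simp only [Nat.succ_eq_add_one]
      omega

theorem chi_succ (n : ℕ) : ∀ d, chi (n+1) d = chi n d + sh (chi n) d
  | 0 => by simp [chi, sh]
  | (d+1) => by
      show (n+1).choose (d+1) = n.choose (d+1) + n.choose d
      rw [Nat.choose_succ_succ]
      simp only [Nat.succ_eq_add_one]
      omega

theorem T_sh' (h : ℕ → ℕ) : ∀ d, T (sh h) d = sh (T h) d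
  | 0 => rfl
  | (d+1) => T_sh h d

theorem Tn_add (g h : ℕ → ℕ) : ∀ k d, Tn k (fun x => g x + h x) d = Tn k g d + Tn k h d
  | 0, _ => rfl
  | (k+1), d => by
      show T (Tn k fun x => g x + h x) d = T (Tn k g) d + T (Tn k h) d
      rw [← T_add, ]
      exact T_congr (Tn_add g h k) d

theorem Tn_sh (h : ℕ → ℕ) : ∀ k d, Tn k (sh h) d = sh (Tn k h) d
  | 0, _ => rfl
  | (k+1), d => by
      show T (Tn k (sh h)) d = sh (T (Tn k h)) d
      rw [T_congr (Tn_sh h k) d, T_sh']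

theorem Tn_mono {g h : ℕ → ℕ} (hgh : ∀ d, g d ≤ h d) : ∀ k d, Tn k g d ≤ Tn k h d
  | 0, d => hgh d
  | (k+1), d => T_mono (Tn_mono hgh k) d

theorem Tn_chi (n : ℕ) : ∀ d, Tn n (chi n) d = Dm n d := by
  induction n with
  | zero =>
      intro d
      cases d with
      | zero => rfl
      | succ d => show (0:ℕ).choose (d+1) = (0 + (d+1) - 1).choose (d+1); simp [Nat.choose_eq_zero_of_lt]
  | succ n ih =>
      intro d
      have hc : chi (n+1) = fun x => chi n x + sh (chi n) x := funext (chi_succ n)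
      rw [hc, Tn_add, Tn_sh]
      have hD : Tn n (chi n) = Dm n := funext ih
      show T (Tn n (chi n)) d + sh (T (Tn n (chi n))) d = Dm (n+1) d
      rw [hD, T_add_sh, cum_Dm]


variable {K : Type*} [Field K] {n : ℕ}

noncomputable def degSetEquivSym (n d : ℕ) :
    {x : Fin n →₀ ℕ // x.degree = d} ≃ Sym (Fin n) d where
  toFun x := ⟨Finsupp.toMultiset x.1, by
    rw [Finsupp.card_toMultiset]; exact x.2⟩
  invFun m := ⟨Multiset.toFinsupp m.1, by
    have h1 : (Multiset.toFinsupp m.1).degree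
        = Multiset.card (Finsupp.toMultiset (Multiset.toFinsupp m.1)) := by
      rw [Finsupp.card_toMultiset]; rfl
    rw [h1, Multiset.toFinsupp_toMultiset]; exact m.2⟩
  left_inv x := by ext1; simp
  right_inv m := by ext1; simp

noncomputable instance (n d : ℕ) : Fintype {x : Fin n →₀ ℕ // x.degree = d} :=
  Fintype.ofEquiv _ (degSetEquivSym n d).symm

theorem card_degSet (n d : ℕ) : Fintype.card {x : Fin n →₀ ℕ // x.degree = d} = Dm n d := by
  rw [Fintype.card_congr (degSetEquivSym n d), Sym.card_sym_eq_multichoose,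
    Nat.multichoose_eq, Fintype.card_fin]
  rfl

/-- basis of the degree-d homogeneous component by monomials -/
noncomputable def basisU (n : ℕ) (K : Type*) [Field K] (d : ℕ) :
    Module.Basis {x : Fin n →₀ ℕ // x.degree = d} K (homogeneousSubmodule (Fin n) K d) :=
  (MvPolynomial.basisRestrictSupport K {x : Fin n →₀ ℕ | x.degree = d}).map
    (LinearEquiv.ofEq _ _ (homogeneousSubmodule_eq_finsupp_supported (Fin n) K d).symm)

instance (d : ℕ) : FiniteDimensional K (homogeneousSubmodule (Fin n) K d) :=
  Module.Finite.of_basis (basisU n K d)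

theorem finrank_U (d : ℕ) :
    Module.finrank K (homogeneousSubmodule (Fin n) K d) = Dm n d := by
  rw [Module.finrank_eq_card_basis (basisU n K d), card_degSet]

theorem hcomp_mul {g : MvPolynomial (Fin n) K} {k : ℕ} (hg : g.IsHomogeneous k)
    (q : MvPolynomial (Fin n) K) (d : ℕ) :
    homogeneousComponent d (g * q)
      = if k ≤ d then g * homogeneousComponent (d - k) q else 0 := by
  conv_lhs => rw [← sum_homogeneousComponent q]
  rw [Finset.mul_sum, map_sum]
  have hterm : ∀ i, homogeneousComponent d (g * homogeneousComponent i q)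
      = if d = k + i then g * homogeneousComponent i q else 0 := fun i =>
    homogeneousComponent_of_mem (hg.mul (homogeneousComponent_isHomogeneous i q))
  by_cases hkd : k ≤ d
  · have hcond : ∀ i : ℕ, (d = k + i) ↔ (d - k = i) := by omega
    simp_rw [hterm, hcond]
    rw [Finset.sum_ite_eq (Finset.range (q.totalDegree + 1)) (d - k)
      (fun i => g * homogeneousComponent i q)]
    rw [if_pos hkd]
    by_cases hmem : d - k ∈ Finset.range (q.totalDegree + 1)
    · rw [if_pos hmem]
    · rw [if_neg hmem]
      have : q.totalDegree < d - k := by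
        simp only [Finset.mem_range] at hmem; omega
      rw [homogeneousComponent_eq_zero _ q this, mul_zero]
  · have hcond : ∀ i : ℕ, ¬ (d = k + i) := by omega
    simp_rw [hterm]
    rw [if_neg hkd]
    exact Finset.sum_eq_zero fun i _ => if_neg (hcond i)

theorem hcomp_span {G : Set (MvPolynomial (Fin n) K)} (hG : ∀ g ∈ G, g.IsHomogeneous 2)
    {x : MvPolynomial (Fin n) K} (hx : x ∈ Ideal.span G) : ∀ d : ℕ,
    homogeneousComponent d x ∈ Ideal.span G ∧ (d < 2 → homogeneousComponent d x = 0) := by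
  induction hx using Submodule.span_induction with
  | mem g hg' =>
      intro d
      rw [homogeneousComponent_of_mem (hG g hg')]
      constructor
      · split
        · exact Ideal.subset_span hg'
        · exact Submodule.zero_mem _
      · intro hd
        rw [if_neg (by omega)]
  | zero => simp
  | add x y _ _ ihx ihy =>
      intro d
      refine ⟨?_, fun hd => ?_⟩
      · rw [map_add]; exact Submodule.add_mem _ (ihx d).1 (ihy d).1
      · rw [map_add, (ihx d).2 hd, (ihy d).2 hd, add_zero]
  | smul a x hxmem ih =>
      intro d
      have key : homogeneousComponent d (a • x)
          = ∑ i ∈ Finset.range (a.totalDegree + 1),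
              homogeneousComponent d (homogeneousComponent i a * x) := by
        rw [smul_eq_mul]
        conv_lhs => rw [← sum_homogeneousComponent a]
        rw [Finset.sum_mul, map_sum]
      refine ⟨?_, fun hd => ?_⟩
      · rw [key]
        refine Submodule.sum_mem _ fun i _ => ?_
        rw [hcomp_mul (homogeneousComponent_isHomogeneous i a) x d]
        split
        · exact Ideal.mul_mem_left _ _ ((ih (d - i)).1)
        · exact Submodule.zero_mem _
      · rw [key]
        refine Finset.sum_eq_zero fun i _ => ?_
        rw [hcomp_mul (homogeneousComponent_isHomogeneous i a) x d]
        split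
        · rw [(ih (d - i)).2 (by omega), mul_zero]
        · rfl

theorem inf_U_eq_bot_of_lt_two {G : Set (MvPolynomial (Fin n) K)}
    (hG : ∀ g ∈ G, g.IsHomogeneous 2) {d : ℕ} (hd : d < 2) :
    (Ideal.span G).restrictScalars K ⊓ homogeneousSubmodule (Fin n) K d = ⊥ := by
  rw [eq_bot_iff]
  rintro x ⟨hxI, hxU⟩
  have hx : homogeneousComponent d x = x := by
    rw [homogeneousComponent_of_mem hxU, if_pos rfl]
  have := (hcomp_span hG hxI d).2 hd
  rw [hx] at this
  simp [this]

section RankLemmas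

variable {V : Type*} [AddCommGroup V] [Module K V]

theorem finrank_sup_map_le (A X B : Submodule K V) (φ : V →ₗ[K] V)
    [FiniteDimensional K A] [FiniteDimensional K X]
    (hBX : B ≤ X) (hφB : B.map φ ≤ A) :
    Module.finrank K ↥(A ⊔ X.map φ) + Module.finrank K B
      ≤ Module.finrank K A + Module.finrank K X := by
  classical
  set ψ : (A × X) →ₗ[K] V := LinearMap.coprod A.subtype (φ.comp X.subtype) with hψ
  have hrange : LinearMap.range ψ = A ⊔ X.map φ := by
    rw [hψ, LinearMap.range_coprod, Submodule.range_subtype, LinearMap.range_comp,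
      Submodule.range_subtype]
  have hrn := LinearMap.finrank_range_add_finrank_ker ψ
  rw [hrange, Module.finrank_prod] at hrn
  -- embed B into ker ψ
  have hmem : ∀ b : B, (-(φ b) : V) ∈ A := fun b =>
    neg_mem (hφB ⟨(b : V), b.2, rfl⟩)
  set j : B →ₗ[K] (A × X) :=
    LinearMap.prod
      (LinearMap.codRestrict A ((-φ).comp B.subtype) (fun b => by simpa using hmem b))
      (Submodule.inclusion hBX) with hj
  have hjker : ∀ b, j b ∈ LinearMap.ker ψ := by
    intro b
    simp only [LinearMap.mem_ker, hψ, hj, LinearMap.coprod_apply, LinearMap.prod_apply,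
      Pi.prod, Submodule.coe_subtype, LinearMap.codRestrict_apply, LinearMap.comp_apply,
      LinearMap.neg_apply, Submodule.coe_inclusion]
    exact neg_add_cancel _
  set j' : B →ₗ[K] LinearMap.ker ψ := LinearMap.codRestrict _ j hjker
  have hinj : Function.Injective j' := by
    intro b b' hbb
    have h1 : j b = j b' := congrArg Subtype.val hbb
    have h2 : (j b).2 = (j b').2 := by rw [h1]
    have h3 : ((j b).2 : V) = ((j b').2 : V) := congrArg Subtype.val h2
    have h4 : ((j b).2 : V) = (b : V) := rfl
    have h5 : ((j b').2 : V) = (b' : V) := rfl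
    exact Subtype.ext (h4 ▸ h5 ▸ h3)
  have hB := LinearMap.finrank_le_finrank_of_injective hinj
  omega

theorem finrank_map_mkQ_add (W Vs : Submodule K V) [FiniteDimensional K W] :
    Module.finrank K (W.map Vs.mkQ) + Module.finrank K ↥(Vs ⊓ W)
      = Module.finrank K W := by
  have h := LinearMap.finrank_range_add_finrank_ker (Vs.mkQ.comp W.subtype)
  rw [LinearMap.range_comp, Submodule.range_subtype] at h
  have hker : LinearMap.ker (Vs.mkQ.comp W.subtype)
      = Submodule.comap W.subtype (Vs ⊓ W) := by
    rw [LinearMap.ker_comp, Submodule.ker_mkQ]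
    ext z
    simp only [Submodule.mem_comap, Submodule.coe_subtype, Submodule.mem_inf]
    exact ⟨fun hz => ⟨hz, z.2⟩, fun hz => hz.1⟩
  rw [hker,
    (Submodule.comapSubtypeEquivOfLe (inf_le_right : Vs ⊓ W ≤ W)).finrank_eq] at h
  exact h

end RankLemmas

section Chain

theorem span_insert_inf_U_le {G : Set (MvPolynomial (Fin n) K)} {g0 : MvPolynomial (Fin n) K}
    (hG : ∀ g ∈ G, g.IsHomogeneous 2) (hg0 : g0.IsHomogeneous 2) (d : ℕ) :
    (Ideal.span (insert g0 G)).restrictScalars K ⊓ homogeneousSubmodule (Fin n) K (d+2)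
      ≤ ((Ideal.span G).restrictScalars K ⊓ homogeneousSubmodule (Fin n) K (d+2))
        ⊔ (homogeneousSubmodule (Fin n) K d).map (LinearMap.mulLeft K g0) := by
  rintro x ⟨hxI, hxU⟩
  obtain ⟨u, z, hz, hxuz⟩ := Ideal.mem_span_insert.mp hxI
  have hx : homogeneousComponent (d+2) x = x := by
    rw [homogeneousComponent_of_mem hxU, if_pos rfl]
  have hcalc : x = g0 * homogeneousComponent d u + homogeneousComponent (d+2) z := by
    conv_lhs => rw [← hx, hxuz]
    rw [map_add, mul_comm u g0, hcomp_mul hg0 u (d+2), if_pos (by omega)]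
    congr 2
  rw [hcalc]
  exact Submodule.add_mem _
    (Submodule.mem_sup_right ⟨homogeneousComponent d u, homogeneousComponent_mem _ _, rfl⟩)
    (Submodule.mem_sup_left ⟨(hcomp_span hG hz (d+2)).1, homogeneousComponent_mem _ _⟩)

variable (F : Fin n → MvPolynomial (Fin n) K)

/-- first k generators -/
def gset (k : ℕ) : Set (MvPolynomial (Fin n) K) := F '' {i : Fin n | (i : ℕ) < k}

theorem gset_zero : gset F 0 = ∅ := by simp [gset]

theorem gset_succ {k : ℕ} (hk : k < n) :
    gset F (k+1) = insert (F ⟨k, hk⟩) (gset F k) := by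
  unfold gset
  rw [show {i : Fin n | (i : ℕ) < k + 1} = insert (⟨k, hk⟩ : Fin n) {i : Fin n | (i : ℕ) < k}
    from Set.ext fun i => by
      simp only [Set.mem_setOf_eq, Set.mem_insert_iff, Fin.ext_iff]
      omega]
  rw [Set.image_insert_eq]

theorem gset_top : gset F n = Set.range F := by
  unfold gset
  rw [show {i : Fin n | (i : ℕ) < n} = Set.univ from Set.ext fun i => by simp [i.isLt]]
  rw [Set.image_univ]

theorem gset_sub_range (k : ℕ) : gset F k ⊆ Set.range F := fun _ ⟨i, _, h⟩ => ⟨i, h⟩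

/-- dimension of degree-d part of the ideal generated by the first k gens -/
noncomputable def GG (k d : ℕ) : ℕ :=
  Module.finrank K ↥((Ideal.span (gset F k)).restrictScalars K ⊓ homogeneousSubmodule (Fin n) K d)

/-- Hilbert function of quotient by first k gens -/
noncomputable def HH (k d : ℕ) : ℕ :=
  Module.finrank K ((homogeneousSubmodule (Fin n) K d).map
    ((Ideal.span (gset F k)).restrictScalars K).mkQ)

variable (hF : ∀ i, (F i).IsHomogeneous 2)
include hF

theorem HH_add_GG (k d : ℕ) : HH F k d + GG F k d = Dm n d := by
  rw [← finrank_U (K := K) (n := n) d]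
  exact finrank_map_mkQ_add _ _

theorem GG_zero (d : ℕ) : GG F 0 d = 0 := by
  unfold GG
  rw [gset_zero, Ideal.span_empty]
  have : (⊥ : Ideal (MvPolynomial (Fin n) K)).restrictScalars K
      ⊓ homogeneousSubmodule (Fin n) K d = ⊥ := by
    rw [eq_bot_iff]; rintro x ⟨hx1, _⟩; exact hx1
  rw [this]
  exact finrank_bot K _

theorem GG_low (k d : ℕ) (hd : d < 2) : GG F k d = 0 := by
  unfold GG
  rw [inf_U_eq_bot_of_lt_two (fun g hg => by
    obtain ⟨i, hi⟩ := gset_sub_range F k hg; exact hi ▸ hF i) hd]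
  exact finrank_bot K _

theorem GG_step {k : ℕ} (hk : k < n) (d : ℕ) :
    GG F (k+1) (d+2) + GG F k d ≤ GG F k (d+2) + Dm n d := by
  classical
  set U2 := homogeneousSubmodule (Fin n) K (d+2)
  set Ud := homogeneousSubmodule (Fin n) K d
  set g0 := F ⟨k, hk⟩
  set A := (Ideal.span (gset F k)).restrictScalars K ⊓ U2
  set B := (Ideal.span (gset F k)).restrictScalars K ⊓ Ud
  have hG : ∀ g ∈ gset F k, MvPolynomial.IsHomogeneous g 2 := fun g hg => by
    obtain ⟨i, hi⟩ := gset_sub_range F k hg; exact hi ▸ hF i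
  have hle : (Ideal.span (gset F (k+1))).restrictScalars K ⊓ U2
      ≤ A ⊔ Ud.map (LinearMap.mulLeft K g0) := by
    rw [gset_succ F hk]
    exact span_insert_inf_U_le hG (hF _) d
  have h1 : GG F (k+1) (d+2) ≤ Module.finrank K ↥(A ⊔ Ud.map (LinearMap.mulLeft K g0)) :=
    Submodule.finrank_mono hle
  have h2 : Module.finrank K ↥(A ⊔ Ud.map (LinearMap.mulLeft K g0)) + Module.finrank K ↥B
      ≤ Module.finrank K ↥A + Module.finrank K ↥Ud := by
    apply finrank_sup_map_le A Ud B (LinearMap.mulLeft K g0) inf_le_right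
    rintro x ⟨y, hy, rfl⟩
    refine ⟨?_, ?_⟩
    · exact Ideal.mul_mem_left _ _ hy.1
    · have := (hF ⟨k, hk⟩).mul (hy.2 : MvPolynomial.IsHomogeneous y d)
      rw [LinearMap.mulLeft_apply]
      exact (by rwa [add_comm] at this : MvPolynomial.IsHomogeneous (g0 * y) (d+2))
  have h3 : Module.finrank K ↥Ud = Dm n d := finrank_U d
  have b1 : GG F k (d+2) = Module.finrank K ↥A := rfl
  have b2 : GG F k d = Module.finrank K ↥B := rfl
  rw [b1, b2]
  omega

theorem HH_step {k : ℕ} (hk : k < n) (d : ℕ) :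
    HH F k (d+2) ≤ HH F (k+1) (d+2) + HH F k d := by
  have e1 := HH_add_GG F hF k (d+2)
  have e2 := HH_add_GG F hF (k+1) (d+2)
  have e3 := HH_add_GG F hF k d
  have e4 := GG_step F hF hk d
  omega

theorem HH_low (k d : ℕ) (hd : d < 2) : HH F k d = Dm n d := by
  have e1 := HH_add_GG F hF k d
  have e2 := GG_low F hF k d hd
  omega

theorem HH_chain : ∀ j, j ≤ n → ∀ d, HH F (n - j) d ≤ Tn j (HH F n) d := by
  intro j
  induction j with
  | zero => intro _ d; simp [Tn]
  | succ j ih =>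
      intro hj d
      have hkn : n - (j+1) < n := by omega
      have hsucc : n - (j+1) + 1 = n - j := by omega
      have h1 : ∀ e, HH F (n - (j+1)) e ≤ T (HH F (n - j)) e := by
        apply le_T
        · rw [HH_low F hF _ 0 (by omega), HH_low F hF _ 0 (by omega)]
        · rw [HH_low F hF _ 1 (by omega), HH_low F hF _ 1 (by omega)]
        · intro e
          have := HH_step F hF hkn e
          rw [hsucc] at this
          omega
      exact le_trans (h1 d) (T_mono (fun e => ih (by omega) e) d)

theorem Dm_le_Tn_HH : ∀ d, Dm n d ≤ Tn n (HH F n) d := by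
  intro d
  have h1 := HH_chain F hF n le_rfl d
  rw [Nat.sub_self] at h1
  have e1 := HH_add_GG F hF 0 d
  have e2 := GG_zero F hF d
  omega

end Chain

section Squarefree

/-- exponent vector of the squarefree monomial with support T -/
noncomputable def sqE (T : Finset (Fin n)) : Fin n →₀ ℕ := ∑ i ∈ T, Finsupp.single i 1

theorem sqE_apply (T : Finset (Fin n)) (x : Fin n) : sqE T x = if x ∈ T then 1 else 0 := by
  classical
  unfold sqE
  rw [Finset.sum_apply']
  simp [Finsupp.single_apply]

theorem sqE_support (T : Finset (Fin n)) : (sqE T).support = T := by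
  ext x
  rw [Finsupp.mem_support_iff, sqE_apply]
  split <;> simp_all

theorem sqE_degree (T : Finset (Fin n)) : (sqE T).degree = T.card := by
  rw [Finsupp.degree_apply]
  rw [sqE_support]
  rw [Finset.sum_congr rfl fun x hx => by rw [sqE_apply, if_pos hx]]
  simp

theorem card_sqf (n d : ℕ) : Fintype.card {T : Finset (Fin n) // T.card = d} = n.choose d := by
  classical
  rw [Fintype.card_subtype]
  have : Finset.filter (fun T : Finset (Fin n) => T.card = d) Finset.univ
      = Finset.univ.powersetCard d := by
    rw [Finset.powersetCard_eq_filter, Finset.powerset_univ]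
  rw [this, Finset.card_powersetCard, Finset.card_univ, Fintype.card_fin]

end Squarefree

section Cramer

variable (M : Matrix (Fin n) (Fin n) K)

/-- the generators -/
noncomputable def ff (i : Fin n) : MvPolynomial (Fin n) K := X i * ∑ j, C (M i j) * X j

theorem ff_homog (i : Fin n) : (ff M i).IsHomogeneous 2 := by
  have h1 : (∑ j, C (M i j) * X j : MvPolynomial (Fin n) K).IsHomogeneous 1 := by
    apply IsHomogeneous.sum
    intro j _
    have := (isHomogeneous_C (σ := Fin n) (M i j)).mul (isHomogeneous_X K j)
    simpa using this
  have := (isHomogeneous_X K i).mul h1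
  simpa [ff] using this

theorem mono_mul_X {b : Fin n →₀ ℕ} {j : Fin n} (hb : 1 ≤ b j) :
    (monomial (b - Finsupp.single j 1) (1:K)) * X j = monomial b 1 := by
  rw [X, monomial_mul, mul_one]
  have hcanc : b - Finsupp.single j 1 + Finsupp.single j 1 = b := by
    ext x
    rw [Finsupp.add_apply, Finsupp.tsub_apply, Finsupp.single_apply]
    by_cases hx : j = x
    · subst hx; simp; omega
    · simp [hx]
  rw [hcanc]

theorem mono_mul_X' (b : Fin n →₀ ℕ) (k : Fin n) :
    (monomial b (1:K)) * X k = monomial (b + Finsupp.single k 1) 1 := by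
  rw [X, monomial_mul, mul_one]

theorem cramer_step
    (hmin : ∀ J : Finset (Fin n), J.Nonempty →
      (M.submatrix (Subtype.val : {x // x ∈ J} → Fin n) Subtype.val).det ≠ 0)
    {a : Fin n →₀ ℕ} {i : Fin n} (hai : 2 ≤ a i) :
    monomial a (1:K) ∈ (Ideal.span (Set.range (ff M))).restrictScalars K ⊔
      Submodule.span K ((fun k => monomial (a - Finsupp.single i 1 + Finsupp.single k 1) (1:K)) ''
        ↑(Finset.univ \ a.support)) := by
  classical
  set J := a.support with hJdef
  have hiJ : i ∈ J := by rw [hJdef, Finsupp.mem_support_iff]; omega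
  have hJne : J.Nonempty := ⟨i, hiJ⟩
  set A := M.submatrix (Subtype.val : {x // x ∈ J} → Fin n) Subtype.val with hAdef
  have hdet : A.det ≠ 0 := hmin J hJne
  have hA : A⁻¹ * A = 1 := Matrix.nonsing_inv_mul A (Ne.isUnit hdet)
  set c : {x // x ∈ J} → K := fun j => A⁻¹ ⟨i, hiJ⟩ j with hcdef
  set B : Fin n → K := fun k => ∑ j : {x // x ∈ J}, c j * M (j : Fin n) k with hBdef
  have hc : ∀ (k : Fin n), k ∈ J → B k = if k = i then 1 else 0 := by
    intro k hk
    have h1 := congrFun (congrFun hA ⟨i, hiJ⟩) ⟨k, hk⟩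
    rw [Matrix.mul_apply, Matrix.one_apply] at h1
    have h2 : B k = ∑ j : {x // x ∈ J}, A⁻¹ ⟨i, hiJ⟩ j * A j ⟨k, hk⟩ := by
      rw [hBdef]
      exact Finset.sum_congr rfl fun j _ => by rw [hAdef]; rfl
    rw [h2, h1]
    by_cases hik : k = i
    · rw [if_pos hik, if_pos (by exact Subtype.ext hik.symm)]
    · rw [if_neg hik, if_neg (fun h => hik (congrArg Subtype.val h).symm)]
  -- the element of the ideal
  have hsub1 : ∀ j : {x // x ∈ J}, 1 ≤ (a - Finsupp.single i 1 : Fin n →₀ ℕ) (j : Fin n) := by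
    rintro ⟨j, hj⟩
    have hjs : a j ≠ 0 := Finsupp.mem_support_iff.mp hj
    rw [Finsupp.tsub_apply, Finsupp.single_apply]
    by_cases hij : i = j
    · subst hij; simp; omega
    · simp [hij]; omega
  have hacancel : a - Finsupp.single i 1 + Finsupp.single i 1 = a := by
    ext x
    rw [Finsupp.add_apply, Finsupp.tsub_apply, Finsupp.single_apply]
    by_cases hx : i = x
    · subst hx; simp; omega
    · simp [hx]
  have key : (∑ j : {x // x ∈ J},
        c j • ((monomial (a - Finsupp.single i 1 - Finsupp.single (j : Fin n) 1) (1:K)) * ff M (j : Fin n)))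
      = monomial a 1 + ∑ k ∈ Finset.univ \ J, B k • monomial (a - Finsupp.single i 1 + Finsupp.single k 1) (1:K) := by
    have step1 : ∀ j : {x // x ∈ J},
        (monomial (a - Finsupp.single i 1 - Finsupp.single (j : Fin n) 1) (1:K)) * ff M (j : Fin n)
          = monomial (a - Finsupp.single i 1) 1 * ∑ k, C (M (j : Fin n) k) * X k := by
      intro j
      rw [ff, ← mul_assoc, mono_mul_X (hsub1 j)]
    have hterm : ∀ k : Fin n, monomial (a - Finsupp.single i 1) (1:K) * (C (B k) * X k)
        = B k • monomial (a - Finsupp.single i 1 + Finsupp.single k 1) (1:K) := by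
      intro k
      rw [mul_left_comm, mono_mul_X', ← smul_eq_C_mul]
    calc (∑ j : {x // x ∈ J},
        c j • ((monomial (a - Finsupp.single i 1 - Finsupp.single (j : Fin n) 1) (1:K)) * ff M (j : Fin n)))
        = monomial (a - Finsupp.single i 1) 1 * ∑ k, C (B k) * X k := by
          rw [Finset.sum_congr rfl fun j _ => by rw [step1 j, ← mul_smul_comm]]
          rw [← Finset.mul_sum]
          congr 1
          rw [Finset.sum_congr rfl fun (j : {x // x ∈ J}) (_ : j ∈ Finset.univ) => Finset.smul_sum]
          rw [Finset.sum_comm]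
          refine Finset.sum_congr rfl fun k _ => ?_
          rw [hBdef]
          rw [map_sum, Finset.sum_mul]
          refine Finset.sum_congr rfl fun j _ => ?_
          rw [smul_eq_C_mul, ← mul_assoc, ← C_mul]
      _ = monomial a 1 + ∑ k ∈ Finset.univ \ J, B k • monomial (a - Finsupp.single i 1 + Finsupp.single k 1) (1:K) := by
          rw [Finset.mul_sum]
          rw [Finset.sum_congr rfl fun k _ => hterm k]
          rw [← Finset.sum_sdiff (Finset.subset_univ J)]
          have hJsum : (∑ k ∈ J, B k • monomial (a - Finsupp.single i 1 + Finsupp.single k 1) (1:K))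
              = monomial a 1 := by
            rw [Finset.sum_congr rfl fun k hk => by
              rw [hc k hk, ite_smul, one_smul, zero_smul]]
            rw [Finset.sum_ite_eq' J i
              (fun k => monomial (a - Finsupp.single i 1 + Finsupp.single k 1) (1:K))]
            rw [if_pos hiJ, hacancel]
          rw [hJsum, add_comm]
  have hIdeal : (∑ j : {x // x ∈ J},
        c j • ((monomial (a - Finsupp.single i 1 - Finsupp.single (j : Fin n) 1) (1:K)) * ff M (j : Fin n)))
      ∈ (Ideal.span (Set.range (ff M))).restrictScalars K := by
    refine Submodule.sum_mem _ fun j _ => Submodule.smul_mem _ _ ?_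
    exact Ideal.mul_mem_left _ _ (Ideal.subset_span ⟨(j : Fin n), rfl⟩)
  have hSpan : (∑ k ∈ Finset.univ \ J, B k • monomial (a - Finsupp.single i 1 + Finsupp.single k 1) (1:K))
      ∈ Submodule.span K ((fun k => monomial (a - Finsupp.single i 1 + Finsupp.single k 1) (1:K)) ''
        ↑(Finset.univ \ J)) := by
    refine Submodule.sum_mem _ fun k hk => Submodule.smul_mem _ _ ?_
    exact Submodule.subset_span ⟨k, by simpa using hk, rfl⟩
  have heq : monomial a (1:K) = (∑ j : {x // x ∈ J},
        c j • ((monomial (a - Finsupp.single i 1 - Finsupp.single (j : Fin n) 1) (1:K)) * ff M (j : Fin n)))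
      - ∑ k ∈ Finset.univ \ J, B k • monomial (a - Finsupp.single i 1 + Finsupp.single k 1) (1:K) := by
    rw [key]; ring
  rw [heq]
  exact Submodule.sub_mem _ (Submodule.mem_sup_left hIdeal) (Submodule.mem_sup_right hSpan)

theorem supp_shift {a : Fin n →₀ ℕ} {i k : Fin n} (hai : 2 ≤ a i) (hk : k ∉ a.support) :
    (a - Finsupp.single i 1 + Finsupp.single k 1).support = insert k a.support := by
  classical
  have hk0 : a k = 0 := Finsupp.notMem_support_iff.mp hk
  have hik : i ≠ k := fun h => by rw [← h] at hk0; omega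
  ext x
  rw [Finset.mem_insert, Finsupp.mem_support_iff, Finsupp.mem_support_iff,
    Finsupp.add_apply, Finsupp.tsub_apply, Finsupp.single_apply, Finsupp.single_apply]
  by_cases h2 : k = x
  · subst h2
    simp [hik, hk0]
  · rw [if_neg h2]
    by_cases h1 : i = x
    · subst h1
      rw [if_pos rfl]
      constructor
      · intro h; exact Or.inr (by omega)
      · rintro (h | h); · exact absurd h.symm h2
        · omega
    · rw [if_neg h1]
      constructor
      · intro h; exact Or.inr (by omega)
      · rintro (h | h); · exact absurd h.symm h2
        · omega

theorem ff_range_homog : ∀ g ∈ Set.range (ff M), MvPolynomial.IsHomogeneous g 2 := by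
  rintro g ⟨i, rfl⟩; exact ff_homog M i

theorem monomial_mem_span
    (hmin : ∀ J : Finset (Fin n), J.Nonempty →
      (M.submatrix (Subtype.val : {x // x ∈ J} → Fin n) Subtype.val).det ≠ 0) :
    ∀ (m : ℕ) (a : Fin n →₀ ℕ), (Finset.univ \ a.support).card ≤ m →
    monomial a (1:K) ∈ (Ideal.span (Set.range (ff M))).restrictScalars K ⊔
      Submodule.span K (Set.range fun T : Finset (Fin n) => monomial (sqE T) (1:K)) := by
  intro m
  induction m with
  | zero =>
      intro a ha
      by_cases hsq : ∀ x, a x ≤ 1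
      · have : a = sqE a.support := by
          ext x
          rw [sqE_apply]
          by_cases hx : x ∈ a.support
          · rw [if_pos hx]
            have := Finsupp.mem_support_iff.mp hx
            have := hsq x
            omega
          · rw [if_neg hx]
            exact Finsupp.notMem_support_iff.mp hx
        refine Submodule.mem_sup_right (Submodule.subset_span ⟨a.support, ?_⟩)
        show monomial (sqE a.support) (1:K) = monomial a 1
        rw [← this]
      · push_neg at hsq
        obtain ⟨i, hi⟩ := hsq
        have hcs := cramer_step M hmin hi
        have hempty : Finset.univ \ a.support = ∅ := Finset.card_eq_zero.mp (Nat.le_zero.mp ha)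
        rw [hempty] at hcs
        simp only [Finset.coe_empty, Set.image_empty, Submodule.span_empty] at hcs
        refine Submodule.mem_sup_left ?_
        have := Submodule.mem_sup.mp hcs
        obtain ⟨v, hv, w, hw, hvw⟩ := this
        rw [Submodule.mem_bot] at hw
        rw [← hvw, hw, add_zero]
        exact hv
  | succ m ih =>
      intro a ha
      by_cases hsq : ∀ x, a x ≤ 1
      · have : a = sqE a.support := by
          ext x
          rw [sqE_apply]
          by_cases hx : x ∈ a.support
          · rw [if_pos hx]
            have := Finsupp.mem_support_iff.mp hx
            have := hsq x
            omega
          · rw [if_neg hx]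
            exact Finsupp.notMem_support_iff.mp hx
        refine Submodule.mem_sup_right (Submodule.subset_span ⟨a.support, ?_⟩)
        show monomial (sqE a.support) (1:K) = monomial a 1
        rw [← this]
      · push_neg at hsq
        obtain ⟨i, hi⟩ := hsq
        have hcs := cramer_step M hmin hi
        refine SetLike.le_def.mp (sup_le le_sup_left (Submodule.span_le.mpr ?_)) hcs
        rintro y ⟨k, hk, rfl⟩
        rw [Finset.mem_coe, Finset.mem_sdiff] at hk
        have hknot : k ∉ a.support := hk.2
        have hsupp := supp_shift hi hknot
        have hcard : (Finset.univ \ (a - Finsupp.single i 1 + Finsupp.single k 1).support).card ≤ m := by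
          rw [hsupp]
          have h1 : Finset.univ \ insert k a.support = (Finset.univ \ a.support).erase k := by
            ext z
            simp only [Finset.mem_sdiff, Finset.mem_insert, Finset.mem_erase, Finset.mem_univ,
              true_and]
            tauto
          rw [h1, Finset.card_erase_of_mem (by rw [Finset.mem_sdiff]; exact ⟨Finset.mem_univ k, hknot⟩)]
          omega
        exact ih _ hcard

theorem monomial_mem_span_deg
    (hmin : ∀ J : Finset (Fin n), J.Nonempty →
      (M.submatrix (Subtype.val : {x // x ∈ J} → Fin n) Subtype.val).det ≠ 0)
    {d : ℕ} {a : Fin n →₀ ℕ} (hdeg : a.degree = d) :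
    monomial a (1:K) ∈ (Ideal.span (Set.range (ff M))).restrictScalars K ⊔
      Submodule.span K (Set.range fun T : {T : Finset (Fin n) // T.card = d} =>
        monomial (sqE T.1) (1:K)) := by
  classical
  obtain ⟨v, hv, w, hw, hvw⟩ := Submodule.mem_sup.mp
    (monomial_mem_span M hmin (Finset.univ \ a.support).card a le_rfl)
  have hxU : monomial a (1:K) ∈ homogeneousSubmodule (Fin n) K d :=
    isHomogeneous_monomial _ hdeg
  have hcompx : homogeneousComponent d (monomial a (1:K)) = monomial a 1 := by
    rw [homogeneousComponent_of_mem hxU, if_pos rfl]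
  have hcv : homogeneousComponent d v ∈ (Ideal.span (Set.range (ff M))).restrictScalars K :=
    (hcomp_span (ff_range_homog M) hv d).1
  have hcw : homogeneousComponent d w ∈ Submodule.span K
      (Set.range fun T : {T : Finset (Fin n) // T.card = d} => monomial (sqE T.1) (1:K)) := by
    have hw' : homogeneousComponent d w ∈ Submodule.map (homogeneousComponent (σ := Fin n) (R := K) d)
        (Submodule.span K (Set.range fun T : Finset (Fin n) => monomial (sqE T) (1:K))) :=
      ⟨w, hw, rfl⟩
    rw [Submodule.map_span] at hw'
    refine Submodule.span_le.mpr ?_ hw'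
    rintro y ⟨_, ⟨T, rfl⟩, rfl⟩
    have hT : monomial (sqE T) (1:K) ∈ homogeneousSubmodule (Fin n) K T.card :=
      isHomogeneous_monomial _ (sqE_degree T)
    rw [homogeneousComponent_of_mem hT]
    by_cases hTd : d = T.card
    · rw [if_pos hTd]
      exact Submodule.subset_span ⟨⟨T, hTd.symm⟩, rfl⟩
    · rw [if_neg hTd]
      exact Submodule.zero_mem _
  have : monomial a (1:K) = homogeneousComponent d v + homogeneousComponent d w := by
    rw [← map_add, hvw, hcompx]
  rw [this]
  exact Submodule.add_mem _ (Submodule.mem_sup_left hcv) (Submodule.mem_sup_right hcw)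

section Upper

variable (hmin : ∀ J : Finset (Fin n), J.Nonempty →
      (M.submatrix (Subtype.val : {x // x ∈ J} → Fin n) Subtype.val).det ≠ 0)
include hmin

theorem U_le_sup_sq (d : ℕ) :
    homogeneousSubmodule (Fin n) K d ≤ (Ideal.span (Set.range (ff M))).restrictScalars K ⊔
      Submodule.span K (Set.range fun T : {T : Finset (Fin n) // T.card = d} =>
        monomial (sqE T.1) (1:K)) := by
  intro x hx
  have hxsum : x = ∑ a ∈ x.support, monomial a (coeff a x) := (support_sum_monomial_coeff x).symm
  rw [hxsum]
  refine Submodule.sum_mem _ fun a ha => ?_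
  have hdeg : a.degree = d := by
    rw [Finsupp.degree_eq_weight_one]
    exact (mem_homogeneousSubmodule _ _).mp hx (MvPolynomial.mem_support_iff.mp ha)
  have : monomial a (coeff a x) = coeff a x • monomial a (1:K) := by
    rw [smul_monomial, smul_eq_mul, mul_one]
  rw [this]
  exact Submodule.smul_mem _ _ (monomial_mem_span_deg M hmin hdeg)

theorem map_mkQ_le_span (d : ℕ) :
    (homogeneousSubmodule (Fin n) K d).map
        ((Ideal.span (Set.range (ff M))).restrictScalars K).mkQ
      ≤ Submodule.span K (Set.range fun T : {T : Finset (Fin n) // T.card = d} =>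
          ((Ideal.span (Set.range (ff M))).restrictScalars K).mkQ (monomial (sqE T.1) (1:K))) := by
  set VV := (Ideal.span (Set.range (ff M))).restrictScalars K
  refine (Submodule.map_mono (U_le_sup_sq M hmin d)).trans ?_
  rw [Submodule.map_sup]
  have hVbot : VV.map VV.mkQ = ⊥ := by
    rw [eq_bot_iff]
    rintro y ⟨v, hv, rfl⟩
    rw [Submodule.mem_bot, Submodule.mkQ_apply, Submodule.Quotient.mk_eq_zero]
    exact hv
  rw [hVbot, bot_sup_eq, Submodule.map_span, ← Set.range_comp]
  exact le_rfl

theorem HH_upper (d : ℕ) :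
    Module.finrank K ((homogeneousSubmodule (Fin n) K d).map
        ((Ideal.span (Set.range (ff M))).restrictScalars K).mkQ) ≤ chi n d := by
  classical
  set VV := (Ideal.span (Set.range (ff M))).restrictScalars K
  set qsq : {T : Finset (Fin n) // T.card = d} → (MvPolynomial (Fin n) K ⧸ VV) :=
    fun T => VV.mkQ (monomial (sqE T.1) (1:K)) with hqsq
  haveI : FiniteDimensional K (Submodule.span K (Set.range qsq)) :=
    FiniteDimensional.span_of_finite K (Set.finite_range qsq)
  have h2 := map_mkQ_le_span M hmin d
  calc Module.finrank K ((homogeneousSubmodule (Fin n) K d).map VV.mkQ)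
      ≤ Module.finrank K (Submodule.span K (Set.range qsq)) := Submodule.finrank_mono h2
    _ ≤ Fintype.card {T : Finset (Fin n) // T.card = d} := finrank_range_le_card qsq
    _ = chi n d := card_sqf n d

omit hmin in
theorem finrank_map_congr {I J : Ideal (MvPolynomial (Fin n) K)} (h : I = J) (e : ℕ) :
    Module.finrank K ((homogeneousSubmodule (Fin n) K e).map (I.restrictScalars K).mkQ)
      = Module.finrank K ((homogeneousSubmodule (Fin n) K e).map (J.restrictScalars K).mkQ) := by
  subst h; rfl

theorem main_deg (d : ℕ) :
    Module.finrank K ((homogeneousSubmodule (Fin n) K d).map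
        ((Ideal.span (Set.range (ff M))).restrictScalars K).mkQ) = chi n d := by
  have hHH : ∀ e, HH (ff M) n e = Module.finrank K ((homogeneousSubmodule (Fin n) K e).map
      ((Ideal.span (Set.range (ff M))).restrictScalars K).mkQ) := by
    intro e
    exact finrank_map_congr (by rw [gset_top]) e
  have hup : ∀ e, HH (ff M) n e ≤ chi n e := fun e => by
    rw [hHH e]; exact HH_upper M hmin e
  have h1 : ∀ e, Tn n (HH (ff M) n) e = Tn n (chi n) e := fun e =>
    le_antisymm (Tn_mono hup n e)
      (by rw [Tn_chi]; exact Dm_le_Tn_HH (ff M) (ff_homog M) e)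
  have h2 := eq_of_Tn_eq n h1 d
  rw [← hHH d]
  exact h2

theorem qsq_linearIndependent (d : ℕ) :
    LinearIndependent K (fun T : {T : Finset (Fin n) // T.card = d} =>
      ((Ideal.span (Set.range (ff M))).restrictScalars K).mkQ (monomial (sqE T.1) (1:K))) := by
  rw [linearIndependent_iff_card_eq_finrank_span]
  have hsp : Submodule.span K (Set.range fun T : {T : Finset (Fin n) // T.card = d} =>
        ((Ideal.span (Set.range (ff M))).restrictScalars K).mkQ (monomial (sqE T.1) (1:K)))
      = (homogeneousSubmodule (Fin n) K d).map
          ((Ideal.span (Set.range (ff M))).restrictScalars K).mkQ := by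
    refine le_antisymm ?_ (map_mkQ_le_span M hmin d)
    rw [Submodule.span_le]
    rintro y ⟨T, rfl⟩
    exact ⟨monomial (sqE T.1) 1,
      (mem_homogeneousSubmodule _ _).mpr (isHomogeneous_monomial _ (by rw [sqE_degree, T.2])), rfl⟩
  rw [card_sqf, Set.finrank, hsp, main_deg M hmin d]
  rfl

theorem qb_linearIndependent :
    LinearIndependent K (fun T : Finset (Fin n) =>
      ((Ideal.span (Set.range (ff M))).restrictScalars K).mkQ (monomial (sqE T) (1:K))) := by
  classical
  set VV := (Ideal.span (Set.range (ff M))).restrictScalars K with hVV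
  rw [Fintype.linearIndependent_iff]
  intro g hg T0
  set d := T0.card with hd
  set p : MvPolynomial (Fin n) K := ∑ T : Finset (Fin n), g T • monomial (sqE T) (1:K) with hp
  have hpV : p ∈ Ideal.span (Set.range (ff M)) := by
    have h0 : VV.mkQ p = 0 := by
      rw [hp, map_sum]
      rw [Finset.sum_congr rfl fun T _ => map_smul VV.mkQ (g T) (monomial (sqE T) (1:K))]
      exact hg
    rwa [Submodule.mkQ_apply, Submodule.Quotient.mk_eq_zero] at h0
  have hcompp : homogeneousComponent d p
      = ∑ T ∈ Finset.univ.filter (fun T : Finset (Fin n) => T.card = d),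
          g T • monomial (sqE T) (1:K) := by
    rw [hp, map_sum]
    have h1 : ∀ T : Finset (Fin n), homogeneousComponent d (g T • monomial (sqE T) (1:K))
        = if T.card = d then g T • monomial (sqE T) (1:K) else 0 := by
      intro T
      rw [map_smul, homogeneousComponent_of_mem (isHomogeneous_monomial _ (sqE_degree T))]
      by_cases h : T.card = d
      · rw [if_pos h.symm, if_pos h]
      · rw [if_neg (fun hh => h hh.symm), if_neg h, smul_zero]
    rw [Finset.sum_congr rfl fun T _ => h1 T]
    rw [Finset.sum_filter]
  have hpd : (∑ T ∈ Finset.univ.filter (fun T : Finset (Fin n) => T.card = d),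
      g T • monomial (sqE T) (1:K)) ∈ VV := by
    rw [← hcompp]
    exact (hcomp_span (ff_range_homog M) hpV d).1
  have hsubty : (∑ T ∈ Finset.univ.filter (fun T : Finset (Fin n) => T.card = d),
      g T • monomial (sqE T) (1:K))
      = ∑ T : {T : Finset (Fin n) // T.card = d}, g T.1 • monomial (sqE T.1) (1:K) := by
    rw [Finset.sum_subtype]
    intro x
    simp
  have hzero : (∑ T : {T : Finset (Fin n) // T.card = d},
      g T.1 • VV.mkQ (monomial (sqE T.1) (1:K))) = 0 := by
    calc (∑ T : {T : Finset (Fin n) // T.card = d}, g T.1 • VV.mkQ (monomial (sqE T.1) (1:K)))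
        = VV.mkQ (∑ T : {T : Finset (Fin n) // T.card = d}, g T.1 • monomial (sqE T.1) (1:K)) := by
          rw [map_sum]
          exact Finset.sum_congr rfl fun T _ => (map_smul VV.mkQ (g T.1) _).symm
      _ = VV.mkQ (∑ T ∈ Finset.univ.filter (fun T : Finset (Fin n) => T.card = d),
            g T • monomial (sqE T) (1:K)) := by rw [hsubty]
      _ = 0 := by
          rw [Submodule.mkQ_apply, Submodule.Quotient.mk_eq_zero]
          exact hpd
  exact Fintype.linearIndependent_iff.mp (qsq_linearIndependent M hmin d)
    (fun T => g T.1) hzero ⟨T0, rfl⟩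

theorem qb_span :
    ⊤ ≤ Submodule.span K (Set.range fun T : Finset (Fin n) =>
      ((Ideal.span (Set.range (ff M))).restrictScalars K).mkQ (monomial (sqE T) (1:K))) := by
  set VV := (Ideal.span (Set.range (ff M))).restrictScalars K with hVV
  intro x _
  obtain ⟨p, rfl⟩ := VV.mkQ_surjective x
  have hp : p = ∑ a ∈ p.support, monomial a (coeff a p) := (support_sum_monomial_coeff p).symm
  rw [hp, map_sum]
  refine Submodule.sum_mem _ fun a _ => ?_
  have h1 : monomial a (coeff a p) = coeff a p • monomial a (1:K) := by
    rw [smul_monomial, smul_eq_mul, mul_one]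
  rw [h1, map_smul]
  refine Submodule.smul_mem _ _ ?_
  obtain ⟨v, hv, w, hw, hvw⟩ := Submodule.mem_sup.mp
    (monomial_mem_span M hmin (Finset.univ \ a.support).card a le_rfl)
  have h2 : VV.mkQ (monomial a 1) = VV.mkQ w := by
    rw [← hvw, map_add]
    have h3 : VV.mkQ v = 0 := by
      rw [Submodule.mkQ_apply, Submodule.Quotient.mk_eq_zero]; exact hv
    rw [h3, zero_add]
  rw [h2]
  have hw2 : VV.mkQ w ∈ Submodule.map VV.mkQ
      (Submodule.span K (Set.range fun T : Finset (Fin n) => monomial (sqE T) (1:K))) :=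
    ⟨w, hw, rfl⟩
  rw [Submodule.map_span, ← Set.range_comp] at hw2
  exact hw2

noncomputable def bigBasis : Module.Basis (Finset (Fin n)) K
    (MvPolynomial (Fin n) K ⧸ (Ideal.span (Set.range (ff M))).restrictScalars K) :=
  Module.Basis.mk (qb_linearIndependent M hmin) (qb_span M hmin)

end Upper

end Cramer

end HilbAux

/-- If all principal minors of `M` are nonzero, then `S/I_M` has Hilbert series
`(1+t)^n`: its degree-`d` graded component has dimension `binomial(n,d)`, it is
finite-dimensional, and its total dimension over `K` is `2^n`. -/
theorem hilbert_series_of_quotient_by_IM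
    {K : Type*} [Field K] [CharZero K] {n : ℕ}
    (M : Matrix (Fin n) (Fin n) K)
    (hmin : ∀ J : Finset (Fin n), J.Nonempty →
      (M.submatrix (Subtype.val : {x // x ∈ J} → Fin n) Subtype.val).det ≠ 0) :
    (∀ d : ℕ, Module.finrank K
        ((homogeneousSubmodule (Fin n) K d).map
          ((Ideal.span (Set.range fun i : Fin n =>
              X i * ∑ j, C (M i j) * X j)).restrictScalars K).mkQ)
      = Nat.choose n d) ∧
    Module.Finite K
      (MvPolynomial (Fin n) K ⧸
        (Ideal.span (Set.range fun i : Fin n => X i * ∑ j, C (M i j) * X j) :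
          Ideal (MvPolynomial (Fin n) K))) ∧
    Module.finrank K
      (MvPolynomial (Fin n) K ⧸
        (Ideal.span (Set.range fun i : Fin n => X i * ∑ j, C (M i j) * X j) :
          Ideal (MvPolynomial (Fin n) K)))
      = 2 ^ n := by
  have hI : (fun i : Fin n => X i * ∑ j, C (M i j) * X j) = HilbAux.ff M := rfl
  refine ⟨fun d => ?_, ?_, ?_⟩
  · rw [hI]
    exact HilbAux.main_deg M hmin d
  · rw [hI]
    exact Module.Finite.of_basis ((HilbAux.bigBasis M hmin).map
      (Submodule.Quotient.restrictScalarsEquiv K (Ideal.span (Set.range (HilbAux.ff M)))))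
  · rw [hI]
    rw [Module.finrank_eq_card_basis ((HilbAux.bigBasis M hmin).map
      (Submodule.Quotient.restrictScalarsEquiv K (Ideal.span (Set.range (HilbAux.ff M)))))]
    rw [Fintype.card_finset, Fintype.card_fin]
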